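/- arXiv:1803.02541 — 4 statements merged into one kernel-verified Lean document; each statement's English description precedes it below -/
import Mathlib

section
/- Let A, M, N ∈ ℝ^{n×n} be such that ⟨A⟩ ≤ ⟨M⟩ − |N| (entrywise), where |N| denotes the entrywise absolute value of N. If A is an H-matrix, then M is an H-matrix. -/
open Matrix Filter
open scoped NNReal

noncomputable section

/-- Comparison matrix `⟨A⟩`: `α_ii = |a_ii|`, `α_ij = -|a_ij|` for `i ≠ j`. -/
def cmpMat {n : ℕ} (A : Matrix (Fin n) (Fin n) ℝ) : Matrix (Fin n) (Fin n) ℝ :=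
  Matrix.of fun i j => if i = j then |A i j| else -|A i j|

/-- Entrywise absolute value of a matrix. -/
def absMat {n : ℕ} (A : Matrix (Fin n) (Fin n) ℝ) : Matrix (Fin n) (Fin n) ℝ :=
  Matrix.of fun i j => |A i j|

/-- `A` is an M-matrix: nonpositive off-diagonal entries, nonsingular,
and entrywise nonnegative inverse. -/
def IsMMat {n : ℕ} (A : Matrix (Fin n) (Fin n) ℝ) : Prop :=
  (∀ i j, i ≠ j → A i j ≤ 0) ∧ IsUnit A.det ∧ ∀ i j, 0 ≤ A⁻¹ i j

/-- `A` is an H-matrix: its comparison matrix is an M-matrix. -/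
def IsHMat {n : ℕ} (A : Matrix (Fin n) (Fin n) ℝ) : Prop := IsMMat (cmpMat A)

/-- `A` is an H₊-matrix: an H-matrix with positive diagonal entries. -/
def IsHpMat {n : ℕ} (A : Matrix (Fin n) (Fin n) ℝ) : Prop :=
  IsHMat A ∧ ∀ i, 0 < A i i

/-- Spectral radius of a real matrix: supremum of moduli of its complex eigenvalues. -/
def specRad {n : ℕ} (A : Matrix (Fin n) (Fin n) ℝ) : ℝ :=
  sSup {r : ℝ | ∃ μ : ℂ, μ ∈ spectrum ℂ (A.map Complex.ofReal) ∧ r = ‖μ‖}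

/-- Matrix ∞-norm: maximum absolute row sum. -/
def infNorm {n : ℕ} (A : Matrix (Fin n) (Fin n) ℝ) : ℝ :=
  ⨆ i, ∑ j, |A i j|

/-- `x` solves the linear complementarity problem LCP(A, f):
`x ≥ 0`, `Ax - f ≥ 0`, `xᵀ(Ax - f) = 0`. -/
def SolvesLCP {n : ℕ} (A : Matrix (Fin n) (Fin n) ℝ) (f x : Fin n → ℝ) : Prop :=
  (∀ j, 0 ≤ x j) ∧ (∀ j, f j ≤ (A *ᵥ x) j) ∧ ∑ j, x j * ((A *ᵥ x) j - f j) = 0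

end

attribute [local instance] Matrix.linftyOpNormedRing Matrix.linftyOpNormedAlgebra

/-- Entries of a matrix are bounded by the linfty operator norm. -/
lemma entry_norm_le {n : ℕ} (X : Matrix (Fin n) (Fin n) ℝ) (i j : Fin n) :
    ‖X i j‖ ≤ ‖X‖ := by
  rw [Matrix.linfty_opNorm_def]
  have h1 : ‖X i j‖₊ ≤ ∑ j' : Fin n, ‖X i j'‖₊ :=
    Finset.single_le_sum (f := fun j' => ‖X i j'‖₊) (fun _ _ => zero_le)
      (Finset.mem_univ j)
  have h2 : (∑ j' : Fin n, ‖X i j'‖₊) ≤ (Finset.univ : Finset (Fin n)).sup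
      fun i : Fin n => ∑ j' : Fin n, ‖X i j'‖₊ :=
    Finset.le_sup (f := fun i : Fin n => ∑ j' : Fin n, ‖X i j'‖₊) (Finset.mem_univ i)
  calc ‖X i j‖ = ((‖X i j‖₊ : ℝ≥0) : ℝ) := rfl
    _ ≤ _ := by exact_mod_cast h1.trans h2

/-- Entry evaluation as a continuous linear map. -/
noncomputable def entryCLM {n : ℕ} (i j : Fin n) : Matrix (Fin n) (Fin n) ℝ →L[ℝ] ℝ :=
  LinearMap.mkContinuous
    { toFun := fun X => X i j
      map_add' := fun _ _ => rfl
      map_smul' := fun _ _ => rfl } 1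
    (fun X => by show ‖X i j‖ ≤ 1 * ‖X‖; simpa using entry_norm_le X i j)

/-- Entries of products of entrywise-nonnegative matrices are nonnegative. -/
lemma mul_entry_nonneg {n : ℕ} {X Y : Matrix (Fin n) (Fin n) ℝ}
    (hX : ∀ i j, 0 ≤ X i j) (hY : ∀ i j, 0 ≤ Y i j) : ∀ i j, 0 ≤ (X * Y) i j := by
  intro i j
  rw [Matrix.mul_apply]
  exact Finset.sum_nonneg fun k _ => mul_nonneg (hX i k) (hY k j)

/-- Key lemma: a Z-matrix `C` with `C *ᵥ x` positive for some positive `x` is an M-matrix. -/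
lemma isMMat_of_pos_vec {n : ℕ} (C : Matrix (Fin n) (Fin n) ℝ)
    (hZ : ∀ i j, i ≠ j → C i j ≤ 0) (x : Fin n → ℝ) (hx : ∀ i, 0 < x i)
    (hCx : ∀ i, 0 < (C *ᵥ x) i) : IsMMat C := by
  classical
  -- diagonal entries are positive after scaling
  have hd : ∀ i, 0 < C i i * x i := by
    intro i
    have h1 : (C *ᵥ x) i = C i i * x i + ∑ j ∈ Finset.univ.erase i, C i j * x j := by
      rw [Matrix.mulVec, dotProduct,
        ← Finset.add_sum_erase (Finset.univ : Finset (Fin n)) (fun j => C i j * x j)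
          (Finset.mem_univ i)]
    have h2 : ∑ j ∈ Finset.univ.erase i, C i j * x j ≤ 0 :=
      Finset.sum_nonpos fun j hj =>
        mul_nonpos_of_nonpos_of_nonneg (hZ i j (Finset.ne_of_mem_erase hj).symm) (hx j).le
    nlinarith [hCx i]
  set d : Fin n → ℝ := fun i => C i i * x i with hdd
  set T : Matrix (Fin n) (Fin n) ℝ :=
    Matrix.of fun i j => if i = j then 0 else (-(C i j) * x j) / d i with hTT
  have hT0 : ∀ i j, 0 ≤ T i j := by
    intro i j
    simp only [hTT, Matrix.of_apply]
    split_ifs with h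
    · exact le_refl _
    · exact div_nonneg (mul_nonneg (by linarith [hZ i j h]) (hx j).le) (hd i).le
  -- row sums of T are < 1
  have hrow : ∀ i, ∑ j, |T i j| < 1 := by
    intro i
    have hTsum : ∑ j, |T i j| = (∑ j ∈ Finset.univ.erase i, -(C i j) * x j) / d i := by
      rw [show ∑ j, |T i j| = ∑ j, T i j from
        Finset.sum_congr rfl fun j _ => abs_of_nonneg (hT0 i j)]
      rw [show ∑ j, T i j = ∑ j ∈ Finset.univ.erase i, T i j from
        (Finset.sum_erase _ (by simp [hTT])).symm]
      rw [Finset.sum_div]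
      refine Finset.sum_congr rfl fun j hj => ?_
      have hji : i ≠ j := fun h => (Finset.ne_of_mem_erase hj) h.symm
      simp [hTT, hji]
    have h1 : (C *ᵥ x) i = C i i * x i + ∑ j ∈ Finset.univ.erase i, C i j * x j := by
      rw [Matrix.mulVec, dotProduct,
        ← Finset.add_sum_erase (Finset.univ : Finset (Fin n)) (fun j => C i j * x j)
          (Finset.mem_univ i)]
    have h3 : ∑ j ∈ Finset.univ.erase i, -(C i j) * x j < d i := by
      have : ∑ j ∈ Finset.univ.erase i, -(C i j) * x j
          = -∑ j ∈ Finset.univ.erase i, C i j * x j := by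
        rw [← Finset.sum_neg_distrib]; exact Finset.sum_congr rfl fun j _ => by ring
      rw [this]
      have := hCx i
      rw [h1] at this
      simp only [hdd]
      linarith
    rw [hTsum]
    exact (div_lt_one (hd i)).mpr h3
  have hTnorm : ‖T‖ < 1 := by
    rw [Matrix.linfty_opNorm_def]
    have : ((Finset.univ : Finset (Fin n)).sup fun i => ∑ j, ‖T i j‖₊) < 1 := by
      refine Finset.sup_lt_iff (by norm_num) |>.mpr fun i _ => ?_
      have : ((∑ j, ‖T i j‖₊ : ℝ≥0) : ℝ) < 1 := by
        push_cast
        simpa [Real.norm_eq_abs] using hrow i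
      exact_mod_cast this
    exact_mod_cast this
  -- factorization
  have hdx : ∀ i, d i ≠ 0 := fun i => (hd i).ne'
  have hDU : Matrix.diagonal d * (1 - T) = C * Matrix.diagonal x := by
    ext i j
    rw [Matrix.diagonal_mul, Matrix.mul_diagonal]
    by_cases h : i = j
    · subst h; simp [hTT, hdd]
    · simp only [Matrix.sub_apply, Matrix.one_apply_ne h, hTT, Matrix.of_apply, if_neg h]
      have hne := hdx i
      field_simp
      ring
  have hdetx : IsUnit (Matrix.diagonal x).det := by
    rw [Matrix.det_diagonal]
    exact isUnit_iff_ne_zero.mpr (Finset.prod_ne_zero_iff.mpr fun i _ => (hx i).ne')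
  have hdetd : IsUnit (Matrix.diagonal d).det := by
    rw [Matrix.det_diagonal]
    exact isUnit_iff_ne_zero.mpr (Finset.prod_ne_zero_iff.mpr fun i _ => hdx i)
  have hUunit : IsUnit (1 - T) := isUnit_one_sub_of_norm_lt_one hTnorm
  have hdetU : IsUnit (1 - T).det := (Matrix.isUnit_iff_isUnit_det _).mp hUunit
  have hC : C = Matrix.diagonal d * (1 - T) * (Matrix.diagonal x)⁻¹ := by
    rw [hDU]
    exact (Matrix.mul_nonsing_inv_cancel_right _ C hdetx).symm
  have hdetC : IsUnit C.det := by
    rw [hC, Matrix.det_mul, Matrix.det_mul]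
    exact ((hdetd.mul hdetU).mul (Matrix.isUnit_nonsing_inv_det _ hdetx))
  refine ⟨hZ, hdetC, ?_⟩
  -- inverse formula
  have hCinv : C⁻¹ = Matrix.diagonal x * ((1 - T)⁻¹ * (Matrix.diagonal d)⁻¹) := by
    rw [hC, Matrix.mul_inv_rev, Matrix.mul_inv_rev,
      Matrix.nonsing_inv_nonsing_inv _ hdetx]
  -- nonnegativity of (1 - T)⁻¹
  have hUinv : ∀ i j, 0 ≤ (1 - T)⁻¹ i j := by
    intro i j
    have hgeom : HasSum (fun k : ℕ => T ^ k) (Ring.inverse (1 - T)) :=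
      hasSum_geom_series_inverse T hTnorm
    have hentry : HasSum (fun k : ℕ => (T ^ k) i j) ((Ring.inverse (1 - T)) i j) :=
      (entryCLM i j).hasSum hgeom
    have hpow : ∀ k : ℕ, ∀ i j, 0 ≤ (T ^ k) i j := by
      intro k
      induction k with
      | zero => intro i j; by_cases h : i = j <;> simp [h, Matrix.one_apply, pow_zero]
      | succ m ih =>
        rw [pow_succ]
        exact mul_entry_nonneg ih hT0
    have : 0 ≤ (Ring.inverse (1 - T)) i j := by
      rw [← hentry.tsum_eq]
      exact tsum_nonneg fun k => hpow k i j
    rwa [Matrix.nonsing_inv_eq_ringInverse]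
  intro i j
  rw [hCinv]
  refine mul_entry_nonneg (fun i j => ?_) (mul_entry_nonneg hUinv fun i j => ?_) i j
  · by_cases h : i = j
    · subst h; simp [Matrix.diagonal_apply_eq]; exact (hx i).le
    · simp [Matrix.diagonal_apply_ne _ h]
  · rw [Matrix.inv_diagonal]
    by_cases h : i = j
    · subst h
      have hu : Ring.inverse d = fun i => (d i)⁻¹ :=
        Ring.inverse_unit ⟨d, fun i => (d i)⁻¹, funext fun i => mul_inv_cancel₀ (hdx i),
          funext fun i => inv_mul_cancel₀ (hdx i)⟩
      simp only [Matrix.diagonal_apply_eq, hu]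
      exact inv_nonneg.mpr (hd i).le
    · simp [Matrix.diagonal_apply_ne _ h]

/-- Lemma 2.2: if `⟨A⟩ ≤ ⟨M⟩ - |N|` entrywise and `A` is an H-matrix,
then `M` is an H-matrix. -/
theorem isHMat_of_cmp_le_sub {n : ℕ} (A M N : Matrix (Fin n) (Fin n) ℝ)
    (hle : ∀ i j, cmpMat A i j ≤ cmpMat M i j - absMat N i j)
    (hA : IsHMat A) : IsHMat M := by
  classical
  obtain ⟨hZA, hdetA, hinvA⟩ := hA
  set B := cmpMat A with hB
  set C := cmpMat M with hC
  have hBC : ∀ i j, B i j ≤ C i j := by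
    intro i j
    have := hle i j
    have habs : 0 ≤ absMat N i j := abs_nonneg _
    linarith
  -- x = B⁻¹ applied to the all-ones vector
  set x : Fin n → ℝ := B⁻¹ *ᵥ fun _ => (1 : ℝ) with hxdef
  have hx0 : ∀ i, 0 ≤ x i := by
    intro i
    rw [hxdef]
    simp only [Matrix.mulVec, dotProduct]
    exact Finset.sum_nonneg fun j _ => mul_nonneg (hinvA i j) zero_le_one
  have hxpos : ∀ i, 0 < x i := by
    intro i
    have hrow : ∃ j, B⁻¹ i j ≠ 0 := by
      by_contra h
      push_neg at h
      have h1 : (B⁻¹ * B) i i = 1 := by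
        rw [Matrix.nonsing_inv_mul _ hdetA]; simp [Matrix.one_apply]
      rw [Matrix.mul_apply] at h1
      simp only [h, zero_mul, Finset.sum_const_zero] at h1
      exact one_ne_zero h1.symm
    obtain ⟨j, hj⟩ := hrow
    have hjpos : 0 < B⁻¹ i j := lt_of_le_of_ne (hinvA i j) (Ne.symm hj)
    rw [hxdef]
    simp only [Matrix.mulVec, dotProduct]
    refine Finset.sum_pos' (fun k _ => mul_nonneg (hinvA i k) zero_le_one) ⟨j, Finset.mem_univ j, by simpa using hjpos⟩
  have hBx : B *ᵥ x = fun _ => (1 : ℝ) := by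
    rw [hxdef, Matrix.mulVec_mulVec, Matrix.mul_nonsing_inv _ hdetA, Matrix.one_mulVec]
  have hCx : ∀ i, 0 < (C *ᵥ x) i := by
    intro i
    have h1 : (B *ᵥ x) i ≤ (C *ᵥ x) i := by
      rw [Matrix.mulVec, Matrix.mulVec, dotProduct, dotProduct]
      exact Finset.sum_le_sum fun j _ => mul_le_mul_of_nonneg_right (hBC i j) (hx0 j)
    have h2 : (B *ᵥ x) i = 1 := by rw [hBx]
    linarith
  have hZC : ∀ i j, i ≠ j → C i j ≤ 0 := by
    intro i j hij
    simp only [hC, cmpMat, Matrix.of_apply, if_neg hij]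
    simp [abs_nonneg]
  exact isMMat_of_pos_vec C hZC x hxpos hCx
end

section
/- Let A, M, N ∈ ℝ^{n×n} be such that ⟨A⟩ ≤ ⟨M⟩ − |N| (entrywise). If A is an H-matrix, then the spectral radius satisfies ρ(⟨M⟩⁻¹|N|) < 1. -/
open Matrix Filter

open Module.End
lemma exists_eigvec {n : ℕ} (B : Matrix (Fin n) (Fin n) ℂ) {μ : ℂ} (h : μ ∈ spectrum ℂ B) :
    ∃ v : Fin n → ℂ, v ≠ 0 ∧ B *ᵥ v = μ • v := by
  have h' : HasEigenvalue (Matrix.toLin' B) μ := by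
    rw [hasEigenvalue_iff_mem_spectrum]
    have heq : Matrix.toLin' B
        = Matrix.toLinAlgEquiv (Pi.basisFun ℂ (Fin n)) B := rfl
    rw [heq, AlgEquiv.spectrum_eq (Matrix.toLinAlgEquiv <| Pi.basisFun ℂ (Fin n))]
    exact h
  obtain ⟨v, hv⟩ := h'.exists_hasEigenvector
  exact ⟨v, hv.right, by rw [← Matrix.toLin'_apply]; exact hv.apply_eq_smul⟩

lemma abs_le_helper {n : ℕ} (c : Fin n → ℂ) (i : Fin n) :
    ‖c i‖ - ∑ j ∈ Finset.univ.erase i, ‖c j‖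
      ≤ ‖∑ j, c j‖ := by
  have h1 : c i = (∑ j, c j) - ∑ j ∈ Finset.univ.erase i, c j := by
    rw [eq_sub_iff_add_eq, Finset.add_sum_erase _ c (Finset.mem_univ i)]
  have h2 : ‖c i‖ ≤ ‖∑ j, c j‖
      + ∑ j ∈ Finset.univ.erase i, ‖c j‖ := by
    rw [h1]
    refine le_trans (norm_sub_le _ _) ?_
    gcongr
    exact norm_sum_le _ _
  linarith


lemma map_mul_ofReal {n : ℕ} (P Q : Matrix (Fin n) (Fin n) ℝ) :
    (P * Q).map Complex.ofReal = P.map Complex.ofReal * Q.map Complex.ofReal :=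
  Matrix.map_mul (f := Complex.ofRealHom)

theorem key {n : ℕ} (A M N : Matrix (Fin n) (Fin n) ℝ)
    (hle : ∀ i j, cmpMat A i j ≤ cmpMat M i j - absMat N i j)
    (hA : IsHMat A) {μ : ℂ}
    (hμ : μ ∈ spectrum ℂ (((cmpMat M)⁻¹ * absMat N).map Complex.ofReal)) :
    ‖μ‖ < 1 := by
  by_contra hcon
  push_neg at hcon
  obtain ⟨v, hv0, heig⟩ := exists_eigvec _ hμ
  have hμ0 : μ ≠ 0 := by
    intro h; rw [h] at hcon; simp at hcon; linarith
  by_cases hM : IsUnit (cmpMat M).det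
  · -- main case
    set w : Fin n → ℝ := fun j => ‖v j‖ with hw
    have hwnn : ∀ j, 0 ≤ w j := fun j => norm_nonneg _
    have hMT : (cmpMat M).map (Complex.ofReal) * (((cmpMat M)⁻¹ * absMat N).map Complex.ofReal)
        = (absMat N).map Complex.ofReal := by
      rw [← map_mul_ofReal, ← mul_assoc, Matrix.mul_nonsing_inv _ hM, one_mul]
    have heq : (absMat N).map Complex.ofReal *ᵥ v
        = μ • ((cmpMat M).map Complex.ofReal *ᵥ v) := by
      rw [← hMT, ← Matrix.mulVec_mulVec, heig, Matrix.mulVec_smul]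
    -- componentwise inequality: (cmpMat M *ᵥ w) i ≤ (absMat N *ᵥ w) i
    have hMw : ∀ i, (cmpMat M *ᵥ w) i ≤ (absMat N *ᵥ w) i := by
      intro i
      have hcomp : (∑ j, (absMat N i j : ℂ) * v j)
          = μ * (∑ j, (cmpMat M i j : ℂ) * v j) := by
        have := congrFun heq i
        simpa [Matrix.mulVec, dotProduct, Matrix.map_apply, Pi.smul_apply,
          smul_eq_mul] using this
      -- bound |∑ cmpMat M i j v j|
      have habs1 : ‖∑ j, (cmpMat M i j : ℂ) * v j‖
          ≤ ∑ j, absMat N i j * w j := by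
        have h1 : ‖μ * (∑ j, (cmpMat M i j : ℂ) * v j)‖
            = ‖μ‖ * ‖∑ j, (cmpMat M i j : ℂ) * v j‖ :=
          norm_mul _ _
        have h2 : ‖∑ j, (absMat N i j : ℂ) * v j‖
            ≤ ∑ j, absMat N i j * w j := by
          refine le_trans (norm_sum_le _ _) ?_
          apply Finset.sum_le_sum
          intro j _
          rw [norm_mul, Complex.norm_real, Real.norm_eq_abs, abs_of_nonneg]
          exact abs_nonneg _
        have h3 := hcomp ▸ h2
        rw [h1] at h3
        nlinarith [norm_nonneg (∑ j, (cmpMat M i j : ℂ) * v j),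
          Finset.sum_nonneg (fun j (_ : j ∈ Finset.univ) =>
            mul_nonneg (abs_nonneg (N i j)) (hwnn j))]
      -- reverse triangle with helper
      have htri := abs_le_helper (fun j => (cmpMat M i j : ℂ) * v j) i
      have hdiag : ‖(cmpMat M i i : ℂ) * v i‖ = cmpMat M i i * w i := by
        rw [norm_mul, Complex.norm_real, Real.norm_eq_abs, abs_of_nonneg]
        simp [cmpMat, abs_nonneg]
      have hoff : ∀ j ∈ Finset.univ.erase i,
          ‖(cmpMat M i j : ℂ) * v j‖ = -(cmpMat M i j * w j) := by
        intro j hj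
        have hji : j ≠ i := Finset.ne_of_mem_erase hj
        rw [norm_mul, Complex.norm_real, Real.norm_eq_abs]
        have : cmpMat M i j = -|M i j| := by simp [cmpMat, (Ne.symm hji : ¬ i = j)]
        rw [this]
        simp [abs_of_nonneg (abs_nonneg (M i j)), hw]
      rw [hdiag, Finset.sum_congr rfl hoff] at htri
      have hsplit : (cmpMat M *ᵥ w) i
          = cmpMat M i i * w i + ∑ j ∈ Finset.univ.erase i, cmpMat M i j * w j := by
        rw [Matrix.mulVec, dotProduct,
          ← Finset.add_sum_erase _ (fun j => cmpMat M i j * w j) (Finset.mem_univ i)]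
      have hNw : (absMat N *ᵥ w) i = ∑ j, absMat N i j * w j := rfl
      rw [hsplit, hNw]
      have hsum_neg : ∑ j ∈ Finset.univ.erase i, -(cmpMat M i j * w j)
          = -∑ j ∈ Finset.univ.erase i, cmpMat M i j * w j := by
        rw [Finset.sum_neg_distrib]
      rw [hsum_neg] at htri
      linarith [le_trans htri habs1]
    -- cmpMat A *ᵥ w ≤ 0
    have hAw : ∀ i, (cmpMat A *ᵥ w) i ≤ 0 := by
      intro i
      have h1 : (cmpMat A *ᵥ w) i ≤ ∑ j, (cmpMat M i j - absMat N i j) * w j := by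
        simp only [Matrix.mulVec, dotProduct]
        apply Finset.sum_le_sum
        intro j _
        exact mul_le_mul_of_nonneg_right (hle i j) (hwnn j)
      have h2 : ∑ j, (cmpMat M i j - absMat N i j) * w j
          = (cmpMat M *ᵥ w) i - (absMat N *ᵥ w) i := by
        simp [Matrix.mulVec, dotProduct, sub_mul, Finset.sum_sub_distrib]
      linarith [hMw i, h1, h2 ▸ h1]
    -- invert: w ≤ 0
    obtain ⟨-, hdet, hinvnn⟩ := hA
    have hww : w = (cmpMat A)⁻¹ *ᵥ (cmpMat A *ᵥ w) := by
      rw [Matrix.mulVec_mulVec, Matrix.nonsing_inv_mul _ hdet, Matrix.one_mulVec]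
    have hwle : ∀ i, w i ≤ 0 := by
      intro i
      rw [hww]
      show ∑ j, (cmpMat A)⁻¹ i j * (cmpMat A *ᵥ w) j ≤ 0
      apply Finset.sum_nonpos
      intro j _
      exact mul_nonpos_of_nonneg_of_nonpos (hinvnn i j) (hAw j)
    have : v = 0 := by
      funext j
      have := le_antisymm (hwle j) (hwnn j)
      simpa [hw, norm_eq_zero] using this
    exact hv0 this
  · have hinv0 : (cmpMat M)⁻¹ = 0 := Matrix.nonsing_inv_apply_not_isUnit _ hM
    rw [hinv0, zero_mul] at heig
    have : μ • v = 0 := by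
      rw [← heig]; funext i; simp [Matrix.mulVec, dotProduct, Matrix.map_apply]
    rcases smul_eq_zero.mp this with h | h
    · exact hμ0 h
    · exact hv0 h

/-- Lemma 2.4: if `⟨A⟩ ≤ ⟨M⟩ - |N|` entrywise and `A` is an H-matrix,
then `ρ(⟨M⟩⁻¹ |N|) < 1`. -/
theorem specRad_cmpInv_mul_abs_lt_one {n : ℕ} (A M N : Matrix (Fin n) (Fin n) ℝ)
    (hle : ∀ i j, cmpMat A i j ≤ cmpMat M i j - absMat N i j)
    (hA : IsHMat A) :
    specRad ((cmpMat M)⁻¹ * absMat N) < 1 := by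
  set T := (cmpMat M)⁻¹ * absMat N with hT
  set S := {r : ℝ | ∃ μ : ℂ, μ ∈ spectrum ℂ (T.map Complex.ofReal) ∧ r = ‖μ‖} with hS
  have hSfin : S.Finite := by
    have : S = (fun μ : ℂ => ‖μ‖) '' (spectrum ℂ (T.map Complex.ofReal)) := by
      ext r; simp [hS, Set.mem_image, eq_comm]
    rw [this]
    exact (Matrix.finite_spectrum _).image _
  rcases Set.eq_empty_or_nonempty S with h | h
  · rw [specRad, ← hS, h, Real.sSup_empty]; norm_num
  · have hmem : sSup S ∈ S := h.csSup_mem hSfin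
    obtain ⟨μ, hμ, heq⟩ := hmem
    rw [specRad, ← hS, heq]
    exact key A M N hle hA hμ
end

section
/- Let A ∈ ℝ^{n×n} be an H₊-matrix, let A = M − N be a splitting with ⟨A⟩ ≤ ⟨M⟩ − |N| (entrywise), and let x* ∈ ℝⁿ be a solution of LCP(A, f), i.e. x* ≥ 0, Ax* − f ≥ 0, (x*)ᵀ(Ax* − f) = 0. Let x⁰ ∈ ℝⁿ, and let the sequence y⁰, y¹, …, yˢ be defined by y⁰ = x⁰ and, for j = 1, …, s, yʲ is a solution of LCP(M, f + N yʲ⁻¹), i.e. yʲ ≥ 0, M yʲ − (f + N yʲ⁻¹) ≥ 0, (yʲ)ᵀ(M yʲ − f − N yʲ⁻¹) = 0. Then |yˢ − x*| ≤ (⟨M⟩⁻¹|N|)ˢ |x⁰ − x*| componentwise. -/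
open Matrix Filter

section Aux
variable {n : ℕ}

/-- monotone mulVec for entrywise-nonnegative matrices -/
lemma mulVec_mono {C : Matrix (Fin n) (Fin n) ℝ} (hC : ∀ i j, 0 ≤ C i j)
    {p q : Fin n → ℝ} (h : ∀ i, p i ≤ q i) : ∀ i, (C *ᵥ p) i ≤ (C *ᵥ q) i := by
  intro i
  simp only [Matrix.mulVec, dotProduct]
  exact Finset.sum_le_sum fun j _ => mul_le_mul_of_nonneg_left (h j) (hC i j)

/-- Z-matrix with positive weighted row sums is monotone. -/
lemma zmat_monotone {C : Matrix (Fin n) (Fin n) ℝ}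
    (hZ : ∀ i j, i ≠ j → C i j ≤ 0) (u : Fin n → ℝ) (hu : ∀ i, 0 < u i)
    (hCu : ∀ i, 1 ≤ (C *ᵥ u) i)
    (x : Fin n → ℝ) (hx : ∀ i, 0 ≤ (C *ᵥ x) i) : ∀ i, 0 ≤ x i := by
  intro i
  obtain ⟨i₀, -, hmin⟩ := Finset.exists_min_image Finset.univ (fun j => x j / u j)
    ⟨i, Finset.mem_univ i⟩
  set t := x i₀ / u i₀ with ht
  have hxt : ∀ j, t * u j ≤ x j := by
    intro j
    exact (le_div_iff₀ (hu j)).mp (hmin j (Finset.mem_univ j))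
  have hx0 : x i₀ = t * u i₀ := by
    rw [ht, div_mul_cancel₀ _ (ne_of_gt (hu i₀))]
  have htpos : 0 ≤ t := by
    by_contra hneg
    push_neg at hneg
    have h1 : (C *ᵥ x) i₀ ≤ t * (C *ᵥ u) i₀ := by
      simp only [Matrix.mulVec, dotProduct, Finset.mul_sum]
      apply Finset.sum_le_sum
      intro j _
      rcases eq_or_ne j i₀ with rfl | hj
      · rw [hx0]; ring_nf; exact le_refl _
      · have := mul_le_mul_of_nonpos_left (hxt j) (hZ i₀ j (Ne.symm hj))
        linarith [this]
    have h2 : t * (C *ᵥ u) i₀ ≤ t * 1 :=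
      mul_le_mul_of_nonpos_left (hCu i₀) (le_of_lt hneg)
    have := hx i₀
    linarith
  have := hxt i
  nlinarith [hu i, (hu i).le]

/-- extraction of componentwise complementarity -/
lemma lcp_comp {A : Matrix (Fin n) (Fin n) ℝ} {f x : Fin n → ℝ}
    (h : SolvesLCP A f x) : ∀ i, x i * ((A *ᵥ x) i - f i) = 0 := by
  intro i
  have hterm : ∀ j ∈ Finset.univ, (0:ℝ) ≤ x j * ((A *ᵥ x) j - f j) := by
    intro j _
    exact mul_nonneg (h.1 j) (sub_nonneg.mpr (h.2.1 j))
  exact (Finset.sum_eq_zero_iff_of_nonneg hterm).mp h.2.2 i (Finset.mem_univ i)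

/-- positive diagonal of M from hcmp -/
lemma M_diag_pos {A M N : Matrix (Fin n) (Fin n) ℝ} (hsplit : A = M - N)
    (hAd : ∀ i, 0 < A i i)
    (hcmp : ∀ i j, cmpMat A i j ≤ cmpMat M i j - absMat N i j) :
    ∀ i, 0 < M i i := by
  intro i
  have h1 := hcmp i i
  simp only [cmpMat, absMat, Matrix.of_apply, if_pos rfl, if_true] at h1
  have hN : N i i = M i i - A i i := by
    have := congrFun (congrFun hsplit i) i
    simp [Matrix.sub_apply] at this
    linarith
  by_contra h
  push_neg at h
  have h2 : |M i i| = -(M i i) := abs_of_nonpos h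
  have h3 : -(M i i - A i i) ≤ |M i i - A i i| := neg_le_abs _
  have h4 : A i i ≤ |A i i| := le_abs_self _
  have := hAd i
  rw [hN] at h1
  linarith

end Aux

section Main
variable {n : ℕ}

/-- cmpMat M is "monotone" and invertible with nonnegative inverse. -/
lemma cmpM_props {A M N : Matrix (Fin n) (Fin n) ℝ}
    (hA : IsHpMat A)
    (hcmp : ∀ i j, cmpMat A i j ≤ cmpMat M i j - absMat N i j) :
    (∀ x : Fin n → ℝ, (∀ i, 0 ≤ (cmpMat M *ᵥ x) i) → ∀ i, 0 ≤ x i) ∧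
    IsUnit (cmpMat M).det ∧ (∀ i j, 0 ≤ (cmpMat M)⁻¹ i j) := by
  obtain ⟨⟨hZ, hdet, hinv⟩, hAd⟩ := hA
  set B := cmpMat A with hB
  set C := cmpMat M with hC
  -- the positive vector u
  set u : Fin n → ℝ := B⁻¹ *ᵥ (fun _ => 1) with hu_def
  have hu_nonneg : ∀ i, 0 ≤ u i := by
    intro i
    have hrepr : u i = ∑ j, B⁻¹ i j * 1 := by
      simp [hu_def, Matrix.mulVec, dotProduct]
    rw [hrepr]
    exact Finset.sum_nonneg fun j _ => mul_nonneg (hinv i j) zero_le_one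
  have hBu : B *ᵥ u = fun _ => 1 := by
    rw [hu_def, Matrix.mulVec_mulVec, Matrix.mul_nonsing_inv _ hdet, Matrix.one_mulVec]
  have hu_pos : ∀ i, 0 < u i := by
    intro i
    rcases lt_or_eq_of_le (hu_nonneg i) with h | h
    · exact h
    · exfalso
      have hrow : ∀ j, B⁻¹ i j = 0 := by
        have hsum : ∑ j, B⁻¹ i j * 1 = 0 := by
          have : u i = 0 := h.symm
          simpa [hu_def, Matrix.mulVec, dotProduct] using this
        intro j
        have := (Finset.sum_eq_zero_iff_of_nonneg
          (fun j _ => mul_nonneg (hinv i j) zero_le_one)).mp hsum j (Finset.mem_univ j)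
        simpa using this
      have hone : (B⁻¹ * B) i i = 1 := by
        rw [Matrix.nonsing_inv_mul _ hdet]; simp
      rw [Matrix.mul_apply] at hone
      simp [hrow] at hone
  have hBC : ∀ i j, B i j ≤ C i j := by
    intro i j
    have h1 := hcmp i j
    have h2 : (0:ℝ) ≤ absMat N i j := abs_nonneg _
    linarith
  have hCu : ∀ i, 1 ≤ (C *ᵥ u) i := by
    intro i
    have : (B *ᵥ u) i ≤ (C *ᵥ u) i := by
      simp only [Matrix.mulVec, dotProduct]
      exact Finset.sum_le_sum fun j _ =>
        mul_le_mul_of_nonneg_right (hBC i j) (hu_nonneg j)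
    rw [hBu] at this
    exact this
  have hCZ : ∀ i j, i ≠ j → C i j ≤ 0 := by
    intro i j hij
    simp [hC, cmpMat, if_neg hij]
  have hmono := fun x hx => zmat_monotone hCZ u hu_pos hCu x hx
  have hCdet : IsUnit C.det := by
    rw [isUnit_iff_ne_zero]
    intro h0
    obtain ⟨v, hv, hCv⟩ := (Matrix.exists_mulVec_eq_zero_iff).mpr h0
    have h1 : ∀ i, 0 ≤ v i := hmono v (by intro i; rw [hCv]; exact le_refl _)
    have h2 : ∀ i, 0 ≤ (-v : Fin n → ℝ) i := by
      apply hmono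
      intro i
      rw [Matrix.mulVec_neg, hCv]
      simp
    apply hv
    funext i
    have ha := h1 i; have hb := h2 i
    simp only [Pi.neg_apply] at hb
    simp only [Pi.zero_apply]
    linarith
  refine ⟨hmono, hCdet, ?_⟩
  intro i j
  have hcol : ∀ k, 0 ≤ (C⁻¹ *ᵥ Pi.single j 1) k := by
    apply hmono
    intro k
    rw [Matrix.mulVec_mulVec, Matrix.mul_nonsing_inv _ hCdet, Matrix.one_mulVec]
    by_cases hkj : k = j <;> simp [hkj, Pi.single_apply]
  have := hcol i
  rw [Matrix.mulVec_single] at this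
  simpa using this

/-- Key per-step estimate. -/
lemma step_bound {A M N : Matrix (Fin n) (Fin n) ℝ} {f xstar : Fin n → ℝ}
    (hsplit : A = M - N) (hMd : ∀ i, 0 < M i i)
    (hxstar : SolvesLCP A f xstar)
    (z w : Fin n → ℝ) (hw : SolvesLCP M (fun p => f p + (N *ᵥ z) p) w) :
    ∀ i, (cmpMat M *ᵥ fun p => |w p - xstar p|) i ≤
      (absMat N *ᵥ fun p => |z p - xstar p|) i := by
  intro i
  have hxc := lcp_comp hxstar i
  have hwc := lcp_comp hw i
  have hxge := hxstar.2.1 i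
  have hwge := hw.2.1 i
  have hAx : (A *ᵥ xstar) i = (M *ᵥ xstar) i - (N *ᵥ xstar) i := by
    rw [hsplit, Matrix.sub_mulVec]; simp
  have hT : (0:ℝ) ≤ (absMat N *ᵥ fun p => |z p - xstar p|) i := by
    simp only [Matrix.mulVec, dotProduct]
    exact Finset.sum_nonneg fun j _ => mul_nonneg (abs_nonneg _) (abs_nonneg _)
  have hNd : ∀ c : ℝ, (c = 1 ∨ c = -1) →
      c * ((N *ᵥ z) i - (N *ᵥ xstar) i) ≤ (absMat N *ᵥ fun p => |z p - xstar p|) i := by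
    intro c hc
    simp only [Matrix.mulVec, dotProduct, absMat, Matrix.of_apply,
      ← Finset.sum_sub_distrib, Finset.mul_sum]
    apply Finset.sum_le_sum
    intro j _
    have h1 : c * (N i j * z j - N i j * xstar j) = c * (N i j * (z j - xstar j)) := by ring
    rw [h1]
    calc c * (N i j * (z j - xstar j)) ≤ |c * (N i j * (z j - xstar j))| := le_abs_self _
      _ = |N i j| * |z j - xstar j| := by
          rcases hc with rfl | rfl <;> simp [abs_mul]
  rcases lt_trichotomy (xstar i) (w i) with hlt | heq | hgt
  · -- w i > xstar i ≥ 0, so the M-LCP constraint is tight at i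
    have hwpos : 0 < w i := lt_of_le_of_lt (hxstar.1 i) hlt
    have htight : (M *ᵥ w) i = f i + (N *ᵥ z) i := by
      have := hwc
      have h2 : (M *ᵥ w) i - (f i + (N *ᵥ z) i) = 0 := by
        rcases mul_eq_zero.mp this with h | h
        · exact absurd h (ne_of_gt hwpos)
        · exact h
      linarith
    have hMx : f i + (N *ᵥ xstar) i ≤ (M *ᵥ xstar) i := by
      have := hxge; rw [hAx] at this; linarith
    have hS1 : ∑ j, M i j * (w j - xstar j) ≤ (N *ᵥ z) i - (N *ᵥ xstar) i := by
      have heq1 : ∑ j, M i j * (w j - xstar j) = (M *ᵥ w) i - (M *ᵥ xstar) i := by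
        simp only [Matrix.mulVec, dotProduct, ← Finset.sum_sub_distrib]
        congr 1; funext j; ring
      rw [heq1, htight]
      linarith
    have hkey : (cmpMat M *ᵥ fun p => |w p - xstar p|) i ≤ ∑ j, M i j * (w j - xstar j) := by
      simp only [Matrix.mulVec, dotProduct, cmpMat, Matrix.of_apply]
      apply Finset.sum_le_sum
      intro j _
      by_cases hj : i = j
      · subst hj
        rw [if_pos rfl, abs_of_pos (hMd i), abs_of_pos (by linarith : (0:ℝ) < w i - xstar i)]
      · rw [if_neg hj]
        calc -|M i j| * |w j - xstar j| = -|M i j * (w j - xstar j)| := by rw [abs_mul]; ring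
          _ ≤ M i j * (w j - xstar j) := neg_abs_le _
    calc (cmpMat M *ᵥ fun p => |w p - xstar p|) i
        ≤ ∑ j, M i j * (w j - xstar j) := hkey
      _ ≤ (N *ᵥ z) i - (N *ᵥ xstar) i := hS1
      _ ≤ _ := by have := hNd 1 (Or.inl rfl); linarith
  · -- equal: LHS is nonpositive
    have hle : (cmpMat M *ᵥ fun p => |w p - xstar p|) i ≤ 0 := by
      simp only [Matrix.mulVec, dotProduct, cmpMat, Matrix.of_apply]
      apply Finset.sum_nonpos
      intro j _
      by_cases hj : i = j
      · subst hj; rw [if_pos rfl, ← heq]; simp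
      · rw [if_neg hj]
        exact mul_nonpos_of_nonpos_of_nonneg (neg_nonpos_of_nonneg (abs_nonneg _)) (abs_nonneg _)
    linarith
  · -- xstar i > w i ≥ 0, so A-LCP constraint tight at i
    have hxpos : 0 < xstar i := lt_of_le_of_lt (hw.1 i) hgt
    have htight : (A *ᵥ xstar) i = f i := by
      rcases mul_eq_zero.mp hxc with h | h
      · exact absurd h (ne_of_gt hxpos)
      · linarith
    have hMxeq : (M *ᵥ xstar) i = f i + (N *ᵥ xstar) i := by
      rw [hAx] at htight; linarith
    have hMw : f i + (N *ᵥ z) i ≤ (M *ᵥ w) i := hwge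
    have hS1 : (N *ᵥ z) i - (N *ᵥ xstar) i ≤ ∑ j, M i j * (w j - xstar j) := by
      have heq1 : ∑ j, M i j * (w j - xstar j) = (M *ᵥ w) i - (M *ᵥ xstar) i := by
        simp only [Matrix.mulVec, dotProduct, ← Finset.sum_sub_distrib]
        congr 1; funext j; ring
      rw [heq1, hMxeq]
      linarith
    have hkey : (cmpMat M *ᵥ fun p => |w p - xstar p|) i ≤
        -∑ j, M i j * (w j - xstar j) := by
      rw [← Finset.sum_neg_distrib]
      simp only [Matrix.mulVec, dotProduct, cmpMat, Matrix.of_apply]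
      apply Finset.sum_le_sum
      intro j _
      by_cases hj : i = j
      · subst hj
        rw [if_pos rfl, abs_of_pos (hMd i), abs_of_neg (by linarith : w i - xstar i < 0)]
        ring_nf; exact le_refl _
      · rw [if_neg hj]
        calc -|M i j| * |w j - xstar j| = -|M i j * (w j - xstar j)| := by rw [abs_mul]; ring
          _ ≤ -(M i j * (w j - xstar j)) := by
              have := neg_abs_le (-(M i j * (w j - xstar j)))
              simp at this
              linarith [neg_le_abs (M i j * (w j - xstar j)), le_abs_self (M i j * (w j - xstar j))]
    calc (cmpMat M *ᵥ fun p => |w p - xstar p|) i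
        ≤ -∑ j, M i j * (w j - xstar j) := hkey
      _ ≤ -((N *ᵥ z) i - (N *ᵥ xstar) i) := by linarith
      _ ≤ _ := by have := hNd (-1) (Or.inr rfl); linarith

end Main

/-- Lemma 2.6: error estimate for the inner iteration. If `A` is an H₊-matrix,
`A = M - N` with `⟨A⟩ ≤ ⟨M⟩ - |N|`, `x*` solves LCP(A, f), `y 0 = x⁰` and
`y j` solves LCP(M, f + N y (j-1)) for `j = 1, …, s`, then
`|y s - x*| ≤ (⟨M⟩⁻¹ |N|)^s |x⁰ - x*|` componentwise. -/
theorem inner_iteration_error_bound {n : ℕ} (A M N : Matrix (Fin n) (Fin n) ℝ)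
    (f xstar x0 : Fin n → ℝ)
    (hA : IsHpMat A) (hsplit : A = M - N)
    (hcmp : ∀ i j, cmpMat A i j ≤ cmpMat M i j - absMat N i j)
    (hxstar : SolvesLCP A f xstar)
    (s : ℕ) (y : ℕ → Fin n → ℝ) (hy0 : y 0 = x0)
    (hy : ∀ j, 1 ≤ j → j ≤ s →
      SolvesLCP M (fun p => f p + (N *ᵥ y (j - 1)) p) (y j)) :
    ∀ i, |y s i - xstar i| ≤
      ((((cmpMat M)⁻¹ * absMat N) ^ s) *ᵥ fun p => |x0 p - xstar p|) i := by
  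
  obtain ⟨hmono, hCdet, hCinv⟩ := cmpM_props hA hcmp
  have hMd := M_diag_pos hsplit hA.2 hcmp
  set C := cmpMat M with hCdef
  set P := C⁻¹ * absMat N with hP
  have hPnn : ∀ i j, 0 ≤ P i j := by
    intro i j
    rw [hP, Matrix.mul_apply]
    exact Finset.sum_nonneg fun k _ => mul_nonneg (hCinv i k) (abs_nonneg _)
  have main : ∀ k, k ≤ s →
      ∀ i, |y k i - xstar i| ≤ ((P ^ k) *ᵥ fun p => |x0 p - xstar p|) i := by
    intro k
    induction k with
    | zero =>
      intro _ i
      simp [hy0, pow_zero, Matrix.one_mulVec]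
    | succ k ih =>
      intro hks i
      have hk := ih (le_trans (Nat.le_succ k) hks)
      have hlcp : SolvesLCP M (fun p => f p + (N *ᵥ y k) p) (y (k + 1)) := by
        have := hy (k + 1) (by omega) hks
        simpa using this
      have hstep := step_bound hsplit hMd hxstar (y k) (y (k + 1)) hlcp
      have h1 : ∀ i2, |y (k + 1) i2 - xstar i2| ≤
          (C⁻¹ *ᵥ (absMat N *ᵥ fun p => |y k p - xstar p|)) i2 := by
        intro i2
        have hid : (fun p => |y (k + 1) p - xstar p|) =
            C⁻¹ *ᵥ (C *ᵥ fun p => |y (k + 1) p - xstar p|) := by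
          rw [Matrix.mulVec_mulVec, Matrix.nonsing_inv_mul _ hCdet, Matrix.one_mulVec]
        calc |y (k + 1) i2 - xstar i2|
            = (C⁻¹ *ᵥ (C *ᵥ fun p => |y (k + 1) p - xstar p|)) i2 := by rw [← hid]
          _ ≤ _ := mulVec_mono hCinv hstep i2
      calc |y (k + 1) i - xstar i|
          ≤ (C⁻¹ *ᵥ (absMat N *ᵥ fun p => |y k p - xstar p|)) i := h1 i
        _ = (P *ᵥ fun p => |y k p - xstar p|) i := by rw [hP, ← Matrix.mulVec_mulVec]
        _ ≤ (P *ᵥ ((P ^ k) *ᵥ fun p => |x0 p - xstar p|)) i := mulVec_mono hPnn hk i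
        _ = ((P ^ (k + 1)) *ᵥ fun p => |x0 p - xstar p|) i := by
            rw [Matrix.mulVec_mulVec, ← pow_succ']
  exact main s le_rfl
end

section
/- Let A ∈ ℝ^{n×n} be nonsingular with A⁻¹ ≥ 0 (entrywise). Let A = M − N = P − Q be two regular splittings of A (i.e. M⁻¹ ≥ 0, N ≥ 0, P⁻¹ ≥ 0, Q ≥ 0 entrywise), and suppose P⁻¹ ≥ M⁻¹ entrywise. Then the spectral radii satisfy ρ(P⁻¹Q) ≤ ρ(M⁻¹N). -/
open Matrix Filter

open Topology
open scoped ENNReal NNReal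

namespace SpecAux
attribute [local instance] Matrix.linftyOpNormedRing Matrix.linftyOpNormedAlgebra
set_option synthInstance.maxHeartbeats 1000000
set_option maxHeartbeats 1000000

variable {n : ℕ}

instance : CompleteSpace (Matrix (Fin n) (Fin n) ℂ) := FiniteDimensional.complete ℂ _

/-- complexification -/
def mcx (B : Matrix (Fin n) (Fin n) ℝ) : Matrix (Fin n) (Fin n) ℂ := B.map Complex.ofReal

lemma mcx_mul (B C : Matrix (Fin n) (Fin n) ℝ) : mcx (B * C) = mcx B * mcx C := by
  ext i j; simp [mcx, Matrix.mul_apply, Matrix.map_apply]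

lemma mcx_one : mcx (1 : Matrix (Fin n) (Fin n) ℝ) = 1 := by
  ext i j; simp [mcx, Matrix.map_apply, Matrix.one_apply]; split <;> simp

lemma mcx_pow (B : Matrix (Fin n) (Fin n) ℝ) (k : ℕ) : mcx (B ^ k) = mcx B ^ k := by
  induction k with
  | zero => simpa using mcx_one
  | succ k ih => rw [pow_succ, pow_succ, mcx_mul, ih]

lemma mcx_smul_one_sub (t : ℝ) (B : Matrix (Fin n) (Fin n) ℝ) :
    mcx (t • 1 - B) = algebraMap ℂ (Matrix (Fin n) (Fin n) ℂ) (t : ℂ) - mcx B := by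
  rw [Algebra.algebraMap_eq_smul_one]
  ext i j
  simp [mcx, Matrix.map_apply, Matrix.one_apply, Matrix.sub_apply, Matrix.smul_apply]
  split <;> simp

lemma entry_norm_le (X : Matrix (Fin n) (Fin n) ℂ) (i j : Fin n) : ‖X i j‖ ≤ ‖X‖ := by
  have h : ‖X i j‖₊ ≤ ‖X‖₊ := by
    rw [Matrix.linfty_opNNNorm_def]
    calc ‖X i j‖₊ ≤ ∑ k, ‖X i k‖₊ :=
          Finset.single_le_sum (f := fun k => ‖X i k‖₊) (fun _ _ => zero_le) (Finset.mem_univ j)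
      _ ≤ _ := Finset.le_sup (f := fun i => ∑ j, ‖X i j‖₊) (Finset.mem_univ i)
  exact h


lemma specRad_eq (B : Matrix (Fin n) (Fin n) ℝ) :
    specRad B = sSup {r : ℝ | ∃ μ : ℂ, μ ∈ spectrum ℂ (mcx B) ∧ r = ‖μ‖} := rfl

lemma sset_bddAbove (B : Matrix (Fin n) (Fin n) ℝ) :
    BddAbove {r : ℝ | ∃ μ : ℂ, μ ∈ spectrum ℂ (mcx B) ∧ r = ‖μ‖} := by
  refine ⟨‖mcx B‖ * ‖(1 : Matrix (Fin n) (Fin n) ℂ)‖, ?_⟩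
  rintro r ⟨μ, hμ, rfl⟩
  simpa using spectrum.norm_le_norm_mul_of_mem hμ

lemma abs_le_specRad {B : Matrix (Fin n) (Fin n) ℝ} {μ : ℂ}
    (hμ : μ ∈ spectrum ℂ (mcx B)) : ‖μ‖ ≤ specRad B := by
  rw [specRad_eq]
  exact le_csSup (sset_bddAbove B) ⟨μ, hμ, rfl⟩

lemma specRad_nonneg (B : Matrix (Fin n) (Fin n) ℝ) : 0 ≤ specRad B := by
  rcases Set.eq_empty_or_nonempty
      {r : ℝ | ∃ μ : ℂ, μ ∈ spectrum ℂ (mcx B) ∧ r = ‖μ‖} with h | ⟨r, μ, hμ, rfl⟩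
  · rw [specRad_eq, h, Real.sSup_empty]
  · exact le_trans (norm_nonneg μ) (abs_le_specRad hμ)

lemma specRad_le {B : Matrix (Fin n) (Fin n) ℝ} {b : ℝ} (hb : 0 ≤ b)
    (h : ∀ μ : ℂ, μ ∈ spectrum ℂ (mcx B) → ‖μ‖ ≤ b) : specRad B ≤ b := by
  rw [specRad_eq]
  exact Real.sSup_le (by rintro r ⟨μ, hμ, rfl⟩; exact h μ hμ) hb

lemma pow_mem_spectrum {B : Matrix (Fin n) (Fin n) ℝ} {μ : ℂ}
    (hμ : μ ∈ spectrum ℂ (mcx B)) (k : ℕ) : μ ^ k ∈ spectrum ℂ (mcx (B ^ k)) := by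
  rw [mcx_pow]
  have := spectrum.subset_polynomial_aeval (mcx B) (Polynomial.X ^ k : Polynomial ℂ)
  simpa using this ⟨μ, hμ, by simp⟩

lemma abs_pow_le_norm {B : Matrix (Fin n) (Fin n) ℝ} {μ : ℂ} [Nonempty (Fin n)]
    (hμ : μ ∈ spectrum ℂ (mcx B)) (k : ℕ) : (‖μ‖) ^ k ≤ ‖mcx (B ^ k)‖ := by
  have h := spectrum.norm_le_norm_of_mem (pow_mem_spectrum hμ k)
  simpa using h


/-- entrywise nonnegativity -/
def Nng (B : Matrix (Fin n) (Fin n) ℝ) : Prop := ∀ i j, 0 ≤ B i j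

lemma Nng.mul {B C : Matrix (Fin n) (Fin n) ℝ} (hB : Nng B) (hC : Nng C) : Nng (B * C) := by
  intro i j
  rw [Matrix.mul_apply]
  exact Finset.sum_nonneg fun k _ => mul_nonneg (hB i k) (hC k j)

lemma Nng.pow {B : Matrix (Fin n) (Fin n) ℝ} (hB : Nng B) (k : ℕ) : Nng (B ^ k) := by
  induction k with
  | zero => intro i j; simp [Matrix.one_apply]; split <;> simp
  | succ k ih => rw [pow_succ]; exact ih.mul hB

lemma Nng.mulVec {B : Matrix (Fin n) (Fin n) ℝ} (hB : Nng B) {x : Fin n → ℝ}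
    (hx : ∀ j, 0 ≤ x j) : ∀ i, 0 ≤ (B *ᵥ x) i := by
  intro i
  simp only [Matrix.mulVec, dotProduct]
  exact Finset.sum_nonneg fun k _ => mul_nonneg (hB i k) (hx k)

lemma Nng.mulVec_mono {B : Matrix (Fin n) (Fin n) ℝ} (hB : Nng B) {x y : Fin n → ℝ}
    (hxy : ∀ j, x j ≤ y j) : ∀ i, (B *ᵥ x) i ≤ (B *ᵥ y) i := by
  intro i
  simp only [Matrix.mulVec, dotProduct]
  exact Finset.sum_le_sum fun k _ => mul_le_mul_of_nonneg_left (hxy k) (hB i k)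

/-- Gelfand corollary: eventual norm bound on powers. -/
lemma eventually_norm_pow_le [Nonempty (Fin n)] (B : Matrix (Fin n) (Fin n) ℝ) {s : ℝ}
    (hs : specRad B < s) : ∃ m₀ : ℕ, ∀ m ≥ m₀, ‖mcx (B ^ m)‖ ≤ s ^ m := by
  have hs0 : 0 < s := lt_of_le_of_lt (specRad_nonneg B) hs
  have hL : spectralRadius ℂ (mcx B) ≤ ENNReal.ofReal (specRad B) := by
    rw [spectralRadius]
    refine iSup₂_le fun μ hμ => ?_
    rw [← ENNReal.ofReal_coe_nnreal, coe_nnnorm]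
    exact ENNReal.ofReal_le_ofReal (abs_le_specRad hμ)
  have hlt : spectralRadius ℂ (mcx B) < ENNReal.ofReal s :=
    lt_of_le_of_lt hL (by rwa [ENNReal.ofReal_lt_ofReal_iff hs0])
  have hG := spectrum.pow_nnnorm_pow_one_div_tendsto_nhds_spectralRadius (mcx B)
  have hev := hG.eventually_lt_const hlt
  rw [Filter.eventually_atTop] at hev
  obtain ⟨m₀, hm₀⟩ := hev
  refine ⟨max m₀ 1, fun m hm => ?_⟩
  have hm1 : 1 ≤ m := le_trans (le_max_right _ _) hm
  have h := hm₀ m (le_trans (le_max_left _ _) hm)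
  have hmne : (m : ℝ) ≠ 0 := by positivity
  have h2 : (‖mcx B ^ m‖₊ : ℝ≥0∞) ≤ ENNReal.ofReal s ^ m := by
    have hr : ((‖mcx B ^ m‖₊ : ℝ≥0∞) ^ ((1:ℝ)/(m:ℝ))) ^ (m:ℝ) ≤ (ENNReal.ofReal s) ^ (m:ℝ) :=
      ENNReal.rpow_le_rpow h.le (by positivity)
    rwa [← ENNReal.rpow_mul, one_div, inv_mul_cancel₀ hmne, ENNReal.rpow_one,
      ENNReal.rpow_natCast] at hr
  rw [← ENNReal.ofReal_pow hs0.le, ← ENNReal.ofReal_coe_nnreal, coe_nnnorm] at h2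
  rw [mcx_pow]
  exact (ENNReal.ofReal_le_ofReal_iff (by positivity)).mp h2


lemma mcx_entry_norm (B : Matrix (Fin n) (Fin n) ℝ) (i j : Fin n) : ‖mcx B i j‖ = |B i j| := by
  simp [mcx, Matrix.map_apply, Complex.norm_real]

lemma isUnit_smul_sub [Nonempty (Fin n)] (B : Matrix (Fin n) (Fin n) ℝ) {t : ℝ}
    (ht : specRad B < t) : IsUnit (t • (1 : Matrix (Fin n) (Fin n) ℝ) - B).det := by
  have ht0 : 0 < t := lt_of_le_of_lt (specRad_nonneg B) ht
  have hmem : ((t : ℂ)) ∉ spectrum ℂ (mcx B) := by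
    intro h
    have := abs_le_specRad h
    rw [Complex.norm_real, Real.norm_eq_abs, abs_of_pos ht0] at this
    exact absurd ht (not_lt.mpr this)
  have hu : IsUnit (algebraMap ℂ (Matrix (Fin n) (Fin n) ℂ) (t : ℂ) - mcx B) :=
    spectrum.notMem_iff.mp hmem
  rw [← mcx_smul_one_sub] at hu
  rw [Matrix.isUnit_iff_isUnit_det] at hu
  have hdet : (mcx (t • (1 : Matrix (Fin n) (Fin n) ℝ) - B)).det
      = ((t • (1 : Matrix (Fin n) (Fin n) ℝ) - B).det : ℂ) :=
    (RingHom.map_det Complex.ofRealHom _).symm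
  rw [hdet, isUnit_iff_ne_zero] at hu
  rw [isUnit_iff_ne_zero]
  exact fun h0 => hu (by rw [h0, Complex.ofReal_zero])

lemma neumann_inv_nng [Nonempty (Fin n)] {B : Matrix (Fin n) (Fin n) ℝ} (hB : Nng B) {t : ℝ}
    (ht : specRad B < t) : Nng ((t • (1 : Matrix (Fin n) (Fin n) ℝ) - B)⁻¹) := by
  have ht0 : 0 < t := lt_of_le_of_lt (specRad_nonneg B) ht
  have htne : t ≠ 0 := ne_of_gt ht0
  set C := (t • (1 : Matrix (Fin n) (Fin n) ℝ) - B)⁻¹ with hCdef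
  have hC1 : (t • (1 : Matrix (Fin n) (Fin n) ℝ) - B) * C = 1 :=
    Matrix.mul_nonsing_inv _ (isUnit_smul_sub B ht)
  have hC2 : C * (t • (1 : Matrix (Fin n) (Fin n) ℝ) - B) = 1 :=
    Matrix.nonsing_inv_mul _ (isUnit_smul_sub B ht)
  set P : ℕ → Matrix (Fin n) (Fin n) ℝ :=
    fun m => ∑ k ∈ Finset.range (m + 1), (t⁻¹) ^ (k + 1) • B ^ k with hPdef
  have hPnng : ∀ m, Nng (P m) := by
    intro m i j
    rw [hPdef]
    simp only [Matrix.sum_apply, Matrix.smul_apply, smul_eq_mul]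
    exact Finset.sum_nonneg fun k _ =>
      mul_nonneg (pow_nonneg (inv_nonneg.mpr ht0.le) _) (hB.pow k i j)
  have key : ∀ m, (t • (1 : Matrix (Fin n) (Fin n) ℝ) - B) * P m
      = 1 - (t⁻¹) ^ (m + 1) • B ^ (m + 1) := by
    intro m
    induction m with
    | zero =>
      rw [hPdef]
      simp only [zero_add, Finset.sum_range_one, pow_zero, pow_one]
      rw [mul_smul_comm, mul_one, smul_sub, smul_smul, inv_mul_cancel₀ htne, one_smul]
    | succ m ih =>
      have hstep : P (m + 1) = P m + (t⁻¹) ^ (m + 2) • B ^ (m + 1) := by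
        rw [hPdef]; exact Finset.sum_range_succ _ _
      have hmul : (t • (1 : Matrix (Fin n) (Fin n) ℝ) - B) * B ^ (m + 1)
          = t • B ^ (m + 1) - B ^ (m + 2) := by
        rw [Matrix.sub_mul, Matrix.smul_mul, one_mul, ← pow_succ']
      have hsc : (t⁻¹) ^ (m + 2) * t = (t⁻¹) ^ (m + 1) := by
        rw [pow_succ, mul_assoc, inv_mul_cancel₀ htne, mul_one]
      rw [hstep, mul_add, ih, mul_smul_comm, hmul, smul_sub, smul_smul, hsc]
      abel
  have hPC : ∀ m, P m = C - (t⁻¹) ^ (m + 1) • (C * B ^ (m + 1)) := by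
    intro m
    have h1 : P m = C * ((t • (1 : Matrix (Fin n) (Fin n) ℝ) - B) * P m) := by
      rw [← Matrix.mul_assoc, hC2, Matrix.one_mul]
    rw [key m, Matrix.mul_sub, Matrix.mul_one, mul_smul_comm] at h1
    exact h1
  -- now take limits entrywise
  intro i j
  obtain ⟨s, hs1, hs2⟩ := exists_between ht
  have hs0 : 0 < s := lt_of_le_of_lt (specRad_nonneg B) hs1
  obtain ⟨m₀, hm₀⟩ := eventually_norm_pow_le B hs1
  set K : ℝ := ∑ l, |C i l| with hK
  have hK0 : 0 ≤ K := Finset.sum_nonneg fun l _ => abs_nonneg _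
  have hfbound : ∀ m ≥ m₀, |(t⁻¹) ^ (m + 1) * (C * B ^ (m + 1)) i j|
      ≤ (K * (s / t)) * (s / t) ^ m := by
    intro m hm
    have hBm : ∀ l, |(B ^ (m + 1)) l j| ≤ s ^ (m + 1) := by
      intro l
      calc |(B ^ (m + 1)) l j| = ‖mcx (B ^ (m + 1)) l j‖ := (mcx_entry_norm _ _ _).symm
        _ ≤ ‖mcx (B ^ (m + 1))‖ := entry_norm_le _ _ _
        _ ≤ s ^ (m + 1) := hm₀ (m + 1) (le_trans hm (Nat.le_succ m))
    have hCB : |(C * B ^ (m + 1)) i j| ≤ K * s ^ (m + 1) := by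
      rw [Matrix.mul_apply]
      calc |∑ l, C i l * (B ^ (m + 1)) l j| ≤ ∑ l, |C i l * (B ^ (m + 1)) l j| :=
            Finset.abs_sum_le_sum_abs _ _
        _ ≤ ∑ l, |C i l| * s ^ (m + 1) := by
            refine Finset.sum_le_sum fun l _ => ?_
            rw [abs_mul]
            exact mul_le_mul_of_nonneg_left (hBm l) (abs_nonneg _)
        _ = K * s ^ (m + 1) := by rw [hK, ← Finset.sum_mul]
    rw [abs_mul]
    have h1 : |(t⁻¹) ^ (m + 1)| = (t⁻¹) ^ (m + 1) := abs_of_nonneg (by positivity)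
    rw [h1]
    calc (t⁻¹) ^ (m + 1) * |(C * B ^ (m + 1)) i j|
        ≤ (t⁻¹) ^ (m + 1) * (K * s ^ (m + 1)) :=
          mul_le_mul_of_nonneg_left hCB (by positivity)
      _ = (K * (s / t)) * (s / t) ^ m := by
          ring
  have htends : Tendsto (fun m => (t⁻¹) ^ (m + 1) * (C * B ^ (m + 1)) i j) atTop (𝓝 0) := by
    refine squeeze_zero_norm' (Filter.eventually_atTop.mpr ⟨m₀, hfbound⟩) ?_
    have : Tendsto (fun m : ℕ => (s / t) ^ m) atTop (𝓝 0) :=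
      tendsto_pow_atTop_nhds_zero_of_lt_one (by positivity) (by
        rw [div_lt_one ht0]; exact hs2)
    simpa using this.const_mul (K * (s / t))
  have hPlim : Tendsto (fun m => (P m) i j) atTop (𝓝 (C i j)) := by
    have : (fun m => (P m) i j) = fun m => C i j - (t⁻¹) ^ (m + 1) * (C * B ^ (m + 1)) i j := by
      funext m
      rw [hPC m]
      simp [Matrix.sub_apply, Matrix.smul_apply, smul_eq_mul]
    rw [this]
    simpa using (tendsto_const_nhds (x := C i j)).sub htends
  exact ge_of_tendsto hPlim (Filter.Eventually.of_forall fun m => hPnng m i j)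


lemma norm_mcx_le_sum (X : Matrix (Fin n) (Fin n) ℝ) : ‖mcx X‖ ≤ ∑ i, ∑ j, |X i j| := by
  have h : ‖mcx X‖₊ ≤ ∑ i, ∑ j, ‖mcx X i j‖₊ := by
    rw [Matrix.linfty_opNNNorm_def]
    exact Finset.sup_le fun i _ =>
      Finset.single_le_sum (f := fun i => ∑ j, ‖mcx X i j‖₊) (fun _ _ => zero_le)
        (Finset.mem_univ i)
  calc ‖mcx X‖ = ((‖mcx X‖₊ : ℝ)) := rfl
    _ ≤ ((∑ i, ∑ j, ‖mcx X i j‖₊ : ℝ≥0) : ℝ) := by exact_mod_cast h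
    _ = ∑ i, ∑ j, |X i j| := by
      push_cast
      refine Finset.sum_congr rfl fun i _ => Finset.sum_congr rfl fun j _ => ?_
      rw [← mcx_entry_norm X i j]

lemma specRad_le_of_inv_nng [Nonempty (Fin n)] {B C : Matrix (Fin n) (Fin n) ℝ}
    (hB : Nng B) (hC : Nng C) {t : ℝ} (ht : 0 < t)
    (h1 : (t • (1 : Matrix (Fin n) (Fin n) ℝ) - B) * C = 1) : specRad B ≤ t := by
  have hBC : B * C = t • C - 1 := by
    have := h1
    rw [Matrix.sub_mul, Matrix.smul_mul, Matrix.one_mul, sub_eq_iff_eq_add] at this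
    rw [this]; abel
  set D : ℕ → Matrix (Fin n) (Fin n) ℝ := fun k => B ^ k * C with hDdef
  have hDnng : ∀ k, Nng (D k) := fun k => (hB.pow k).mul hC
  have hD : ∀ k, D (k + 1) = t • D k - B ^ k := by
    intro k
    rw [hDdef]
    simp only
    rw [pow_succ, Matrix.mul_assoc, hBC, Matrix.mul_sub, Matrix.mul_one, mul_smul_comm]
  have hDle : ∀ k, ∀ i j, (D k) i j ≤ t ^ k * C i j := by
    intro k
    induction k with
    | zero => intro i j; simp [hDdef]
    | succ k ih =>
      intro i j
      have h2 : (D (k + 1)) i j ≤ t * (D k) i j := by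
        rw [hD k]
        simp only [Matrix.sub_apply, Matrix.smul_apply, smul_eq_mul]
        linarith [(hB.pow k) i j]
      calc (D (k + 1)) i j ≤ t * (D k) i j := h2
        _ ≤ t * (t ^ k * C i j) := mul_le_mul_of_nonneg_left (ih i j) ht.le
        _ = t ^ (k + 1) * C i j := by ring
  have hBle : ∀ k, ∀ i j, (B ^ k) i j ≤ t ^ (k + 1) * C i j := by
    intro k i j
    have h2 : (B ^ k) i j = t * (D k) i j - (D (k + 1)) i j := by
      rw [hD k]; simp only [Matrix.sub_apply, Matrix.smul_apply, smul_eq_mul]; ring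
    have h3 := hDnng (k + 1) i j
    have h4 := hDle k i j
    calc (B ^ k) i j ≤ t * (D k) i j := by linarith
      _ ≤ t * (t ^ k * C i j) := mul_le_mul_of_nonneg_left h4 ht.le
      _ = t ^ (k + 1) * C i j := by ring
  set KC : ℝ := ∑ i, ∑ j, C i j with hKC
  have hKC0 : 0 ≤ KC := Finset.sum_nonneg fun i _ => Finset.sum_nonneg fun j _ => hC i j
  have hnorm : ∀ k, ‖mcx (B ^ k)‖ ≤ (t * KC) * t ^ k := by
    intro k
    calc ‖mcx (B ^ k)‖ ≤ ∑ i, ∑ j, |(B ^ k) i j| := norm_mcx_le_sum _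
      _ ≤ ∑ i, ∑ j, t ^ (k + 1) * C i j := by
          refine Finset.sum_le_sum fun i _ => Finset.sum_le_sum fun j _ => ?_
          rw [abs_of_nonneg (hB.pow k i j)]
          exact hBle k i j
      _ = (t * KC) * t ^ k := by
          rw [hKC, mul_comm t _, mul_assoc, Finset.sum_mul]
          refine Finset.sum_congr rfl fun i _ => ?_
          rw [Finset.sum_mul]
          refine Finset.sum_congr rfl fun j _ => ?_
          ring
  refine specRad_le ht.le fun μ hμ => ?_
  by_contra hgt
  push_neg at hgt
  have hct : 1 < ‖μ‖ / t := by rw [lt_div_iff₀ ht]; linarith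
  obtain ⟨k, hk⟩ := (tendsto_pow_atTop_atTop_of_one_lt hct).eventually_gt_atTop (t * KC)
    |>.exists
  have h5 : (‖μ‖) ^ k ≤ (t * KC) * t ^ k := le_trans (abs_pow_le_norm hμ k) (hnorm k)
  have h6 : (‖μ‖ / t) ^ k ≤ t * KC := by
    rw [div_pow, div_le_iff₀ (by positivity)]
    calc (‖μ‖) ^ k ≤ (t * KC) * t ^ k := h5
      _ = t * KC * t ^ k := rfl
  exact absurd h6 (not_le.mpr hk)

lemma subinv [Nonempty (Fin n)] {T : Matrix (Fin n) (Fin n) ℝ} (hT : Nng T)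
    {x : Fin n → ℝ} {σ : ℝ} (hx : ∀ j, 0 ≤ x j) (hx0 : x ≠ 0) (hσ : 0 < σ)
    (h : ∀ i, σ * x i ≤ (T *ᵥ x) i) : σ ≤ specRad T := by
  by_contra hlt
  push_neg at hlt
  set t : ℝ := (specRad T + σ) / 2 with htdef
  have ht1 : specRad T < t := by rw [htdef]; linarith
  have ht2 : t < σ := by rw [htdef]; linarith
  have ht0 : 0 < t := lt_of_le_of_lt (specRad_nonneg T) ht1
  set R := (t • (1 : Matrix (Fin n) (Fin n) ℝ) - T)⁻¹ with hRdef
  have hRnng : Nng R := neumann_inv_nng hT ht1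
  have hR2 : R * (t • (1 : Matrix (Fin n) (Fin n) ℝ) - T) = 1 :=
    Matrix.nonsing_inv_mul _ (isUnit_smul_sub T ht1)
  set v : Fin n → ℝ := (t • (1 : Matrix (Fin n) (Fin n) ℝ) - T) *ᵥ x with hvdef
  have hveq : x = R *ᵥ v := by
    rw [hvdef, Matrix.mulVec_mulVec, hR2, Matrix.one_mulVec]
  have hv : ∀ i, v i ≤ 0 := by
    intro i
    rw [hvdef, Matrix.sub_mulVec]
    have h1 : ((t • (1 : Matrix (Fin n) (Fin n) ℝ)) *ᵥ x) i = t * x i := by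
      rw [Matrix.smul_mulVec, Matrix.one_mulVec]; rfl
    simp only [Pi.sub_apply, h1]
    have := h i
    nlinarith [hx i]
  have hxle : ∀ i, x i ≤ 0 := by
    intro i
    rw [hveq]
    calc (R *ᵥ v) i ≤ (R *ᵥ 0) i := hRnng.mulVec_mono hv i
      _ = 0 := by rw [Matrix.mulVec_zero]; rfl
  have : x = 0 := funext fun i => le_antisymm (hxle i) (hx i)
  exact hx0 this


lemma mcx_smul (c : ℝ) (B : Matrix (Fin n) (Fin n) ℝ) : mcx (c • B) = (c : ℂ) • mcx B := by
  ext i j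
  simp [mcx, Matrix.map_apply, Matrix.smul_apply]

lemma one_ne_zero_mat [Nonempty (Fin n)] : (1 : Matrix (Fin n) (Fin n) ℝ) ≠ 0 := by
  intro h
  have i : Fin n := Classical.arbitrary _
  have := congrFun (congrFun h i) i
  simp [Matrix.one_apply] at this

lemma pf_eigenvector [Nonempty (Fin n)] {S : Matrix (Fin n) (Fin n) ℝ} (hS : Nng S)
    (hρ : 0 < specRad S) :
    ∃ x : Fin n → ℝ, (∀ j, 0 ≤ x j) ∧ x ≠ 0 ∧ S *ᵥ x = specRad S • x := by
  set ρ := specRad S with hρdef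
  set t : ℕ → ℝ := fun k => ρ + 1 / (k + 1) with htdef
  have ht : ∀ k, ρ < t k := by
    intro k; rw [htdef]; simp only [lt_add_iff_pos_right]; positivity
  have ht0 : ∀ k, 0 < t k := fun k => lt_trans hρ (ht k)
  set R : ℕ → Matrix (Fin n) (Fin n) ℝ := fun k => (t k • 1 - S)⁻¹ with hRdef
  have hRnng : ∀ k, Nng (R k) := fun k => neumann_inv_nng hS (ht k)
  have hR1 : ∀ k, (t k • 1 - S) * R k = 1 :=
    fun k => Matrix.mul_nonsing_inv _ (isUnit_smul_sub S (ht k))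
  have hR2 : ∀ k, R k * (t k • 1 - S) = 1 :=
    fun k => Matrix.nonsing_inv_mul _ (isUnit_smul_sub S (ht k))
  have hres : ∀ k l, R l - R k = (t k - t l) • (R l * R k) := by
    intro k l
    have h1 : R l * ((t k • (1 : Matrix (Fin n) (Fin n) ℝ) - S)
        - (t l • 1 - S)) * R k = R l - R k := by
      rw [Matrix.mul_sub, Matrix.sub_mul, Matrix.mul_assoc, hR1 k, Matrix.mul_one,
        hR2 l, Matrix.one_mul]
    have h2 : (t k • (1 : Matrix (Fin n) (Fin n) ℝ) - S) - (t l • 1 - S)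
        = (t k - t l) • 1 := by rw [sub_sub_sub_cancel_right, ← sub_smul]
    rw [h2] at h1
    rw [← h1, Matrix.mul_smul, Matrix.mul_one, Matrix.smul_mul]
  have htmono : ∀ k l, k ≤ l → t l ≤ t k := by
    intro k l hkl
    rw [htdef]
    simp only [add_le_add_iff_left]
    apply one_div_le_one_div_of_le (by positivity)
    exact_mod_cast Nat.succ_le_succ hkl
  have hmono : ∀ k l, k ≤ l → ∀ i j, R k i j ≤ R l i j := by
    intro k l hkl i j
    have h2 := congrFun (congrFun (hres k l) i) j
    simp only [Matrix.sub_apply, Matrix.smul_apply, smul_eq_mul] at h2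
    have h3 : 0 ≤ (R l * R k) i j := ((hRnng l).mul (hRnng k)) i j
    nlinarith [sub_nonneg.mpr (htmono k l hkl)]
  by_cases hbdd : ∃ K : ℝ, ∀ k i j, R k i j ≤ K
  · -- bounded resolvent: contradiction with the definition of the spectral radius
    exfalso
    obtain ⟨K, hK⟩ := hbdd
    have hKmono : ∀ i j, BddAbove (Set.range fun k => R k i j) := by
      intro i j
      exact ⟨K, by rintro r ⟨k, rfl⟩; exact hK k i j⟩
    set Rs : Matrix (Fin n) (Fin n) ℝ := Matrix.of (fun i j => ⨆ k, R k i j) with hRsdef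
    have hRslim : ∀ i j, Tendsto (fun k => R k i j) atTop (𝓝 (Rs i j)) := by
      intro i j
      exact tendsto_atTop_ciSup (fun k l hkl => hmono k l hkl i j) (hKmono i j)
    have hRsnng : Nng Rs := by
      intro i j
      exact le_trans (hRnng 0 i j) (le_ciSup (hKmono i j) 0)
    have hRs1 : (ρ • (1 : Matrix (Fin n) (Fin n) ℝ) - S) * Rs = 1 := by
      ext i j
      have hA : ∀ k, ((ρ • (1 : Matrix (Fin n) (Fin n) ℝ) - S) * R k) i j
          = (1 : Matrix (Fin n) (Fin n) ℝ) i j - (1 / (k + 1 : ℝ)) * R k i j := by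
        intro k
        have hsplit : (ρ • (1 : Matrix (Fin n) (Fin n) ℝ) - S)
            = (t k • 1 - S) - (1 / (k + 1 : ℝ)) • 1 := by
          rw [htdef]
          simp only
          rw [add_smul]
          abel
        rw [hsplit, Matrix.sub_mul, hR1 k, Matrix.smul_mul, Matrix.one_mul]
        simp [Matrix.sub_apply, Matrix.smul_apply, smul_eq_mul]
      have hL : Tendsto (fun k => ((ρ • (1 : Matrix (Fin n) (Fin n) ℝ) - S) * R k) i j)
          atTop (𝓝 (((ρ • (1 : Matrix (Fin n) (Fin n) ℝ) - S) * Rs) i j)) := by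
        simp only [Matrix.mul_apply]
        exact tendsto_finset_sum _ fun l _ => (hRslim l j).const_mul _
      have hK0 : 0 ≤ K :=
        le_trans (hRnng 0 (Classical.arbitrary _) (Classical.arbitrary _))
          (hK 0 (Classical.arbitrary _) (Classical.arbitrary _))
      have hR' : Tendsto (fun k : ℕ => (1 / (k + 1 : ℝ)) * R k i j) atTop (𝓝 0) := by
        have hg : ∀ᶠ (k : ℕ) in atTop,
            ‖(1 / (k + 1 : ℝ)) * R k i j‖ ≤ K * (1 / (k + 1 : ℝ)) := by
          refine Filter.eventually_atTop.mpr ⟨0, fun k _ => ?_⟩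
          rw [Real.norm_eq_abs, abs_mul, abs_of_nonneg (by positivity : (0:ℝ) ≤ 1 / (k+1:ℝ)),
            abs_of_nonneg (hRnng k i j)]
          have := hK k i j
          have h1k : (0:ℝ) ≤ 1 / (k+1:ℝ) := by positivity
          nlinarith
        have hg0 : Tendsto (fun k : ℕ => K * (1 / (k + 1 : ℝ))) atTop (𝓝 0) := by
          simpa using tendsto_one_div_add_atTop_nhds_zero_nat.const_mul K
        exact squeeze_zero_norm' hg hg0
      have hL2 : Tendsto (fun k => ((ρ • (1 : Matrix (Fin n) (Fin n) ℝ) - S) * R k) i j)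
          atTop (𝓝 ((1 : Matrix (Fin n) (Fin n) ℝ) i j)) := by
        simp only [hA]
        simpa using (tendsto_const_nhds
          (x := (1 : Matrix (Fin n) (Fin n) ℝ) i j)).sub hR'
      exact tendsto_nhds_unique hL hL2
    have hRs2 : Rs * (ρ • (1 : Matrix (Fin n) (Fin n) ℝ) - S) = 1 :=
      mul_eq_one_comm.mp hRs1
    -- push below the spectral radius
    set β : ℝ := ‖mcx Rs‖ with hβdef
    have hβ0 : 0 ≤ β := norm_nonneg _
    set δ : ℝ := min (1 / (β + 1)) (ρ / 2) with hδdef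
    have hδ0 : 0 < δ := lt_min (by positivity) (by positivity)
    have hδρ : δ ≤ ρ / 2 := min_le_right _ _
    have hδβ : δ * β < 1 := by
      have h1 : δ ≤ 1 / (β + 1) := min_le_left _ _
      have h2 : δ * β ≤ (1 / (β + 1)) * β := mul_le_mul_of_nonneg_right h1 hβ0
      have h3 : (1 / (β + 1)) * β < 1 := by
        rw [div_mul_eq_mul_div, div_lt_one (by positivity)]
        linarith
      linarith
    have hspec : specRad (δ • Rs) < 1 := by
      have hb : ∀ μ : ℂ, μ ∈ spectrum ℂ (mcx (δ • Rs)) → ‖μ‖ ≤ δ * β := by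
        intro μ hμ
        have h1 := abs_pow_le_norm hμ 1
        rw [pow_one, pow_one] at h1
        rw [mcx_smul, norm_smul] at h1
        simpa [abs_of_pos hδ0, hβdef] using h1
      exact lt_of_le_of_lt (specRad_le (by positivity) hb) hδβ
    have hδRsnng : Nng (δ • Rs) := by
      intro i j
      simp only [Matrix.smul_apply, smul_eq_mul]
      exact mul_nonneg hδ0.le (hRsnng i j)
    set E : Matrix (Fin n) (Fin n) ℝ := ((1:ℝ) • 1 - δ • Rs)⁻¹ with hEdef
    have hEnng : Nng E := neumann_inv_nng hδRsnng hspec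
    have hE1 : ((1:ℝ) • 1 - δ • Rs) * E = 1 :=
      Matrix.mul_nonsing_inv _ (isUnit_smul_sub _ hspec)
    have hfact : ((ρ - δ) • (1 : Matrix (Fin n) (Fin n) ℝ) - S)
        = (ρ • 1 - S) * ((1:ℝ) • 1 - δ • Rs) := by
      rw [Matrix.mul_sub, Matrix.mul_smul, Matrix.mul_one, Matrix.mul_smul, hRs1,
        one_smul, sub_smul]
      abel
    have hCmul : ((ρ - δ) • (1 : Matrix (Fin n) (Fin n) ℝ) - S) * (E * Rs) = 1 := by
      rw [hfact, Matrix.mul_assoc, ← Matrix.mul_assoc ((1:ℝ) • 1 - δ • Rs), hE1,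
        Matrix.one_mul, hRs1]
    have hfin : specRad S ≤ ρ - δ :=
      specRad_le_of_inv_nng hS (hEnng.mul hRsnng) (by linarith) hCmul
    rw [← hρdef] at hfin
    linarith
  · -- unbounded resolvent: extract an eigenvector
    push_neg at hbdd
    set c : ℕ → ℝ := fun k => ∑ i, ∑ j, R k i j with hcdef
    have hcmono : Monotone c := by
      intro k l hkl
      exact Finset.sum_le_sum fun i _ => Finset.sum_le_sum fun j _ => hmono k l hkl i j
    have hentry_le_c : ∀ k i j, R k i j ≤ c k := by
      intro k i j
      calc R k i j ≤ ∑ j', R k i j' :=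
            Finset.single_le_sum (f := fun j' => R k i j') (fun _ _ => hRnng k i _)
              (Finset.mem_univ j)
        _ ≤ c k := Finset.single_le_sum (f := fun i' => ∑ j', R k i' j')
              (fun _ _ => Finset.sum_nonneg fun _ _ => hRnng k _ _) (Finset.mem_univ i)
    have hcunbdd : ¬BddAbove (Set.range c) := by
      rintro ⟨b, hb⟩
      obtain ⟨k, i, j, hkij⟩ := hbdd b
      exact absurd (le_trans (hentry_le_c k i j) (hb ⟨k, rfl⟩)) (not_le.mpr hkij)
    have hcinf : Tendsto c atTop atTop := tendsto_atTop_atTop_of_monotone' hcmono hcunbdd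
    have hcpos : ∀ k, 0 < c k := by
      intro k
      rcases (Finset.sum_nonneg fun i _ =>
        Finset.sum_nonneg fun j _ => hRnng k i j : (0:ℝ) ≤ c k).lt_or_eq with h | h
      · exact h
      · exfalso
        have hall : ∀ i ∈ Finset.univ, ∀ j ∈ Finset.univ, R k i j = 0 := by
          have h1 := (Finset.sum_eq_zero_iff_of_nonneg fun i _ =>
            Finset.sum_nonneg fun j _ => hRnng k i j).mp h.symm
          intro i hi j hj
          exact (Finset.sum_eq_zero_iff_of_nonneg fun j _ => hRnng k i j).mp (h1 i hi) j hj
        have hR0 : R k = 0 := by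
          ext i j; exact hall i (Finset.mem_univ i) j (Finset.mem_univ j)
        have := hR2 k
        rw [hR0, Matrix.zero_mul] at this
        exact one_ne_zero_mat this.symm
    set y : ℕ → Fin n → ℝ := fun k => R k *ᵥ (fun _ => 1) with hydef
    have hynng : ∀ k i, 0 ≤ y k i := fun k i => (hRnng k).mulVec (fun _ => zero_le_one) i
    have hysum : ∀ k, ∑ i, y k i = c k := by
      intro k
      rw [hcdef]
      refine Finset.sum_congr rfl fun i _ => ?_
      simp [hydef, Matrix.mulVec, dotProduct]
    set x : ℕ → Fin n → ℝ := fun k => (c k)⁻¹ • y k with hxdef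
    have hxnng : ∀ k i, 0 ≤ x k i := by
      intro k i
      exact mul_nonneg (inv_nonneg.mpr (hcpos k).le) (hynng k i)
    have hxsum : ∀ k, ∑ i, x k i = 1 := by
      intro k
      rw [hxdef]
      simp only [Pi.smul_apply, smul_eq_mul, ← Finset.mul_sum]
      rw [hysum k, inv_mul_cancel₀ (hcpos k).ne']
    have hxmem : ∀ k, x k ∈ Set.Icc (0 : Fin n → ℝ) 1 := by
      intro k
      constructor
      · intro i; exact hxnng k i
      · intro i
        have h1 : x k i ≤ ∑ i', x k i' :=
          Finset.single_le_sum (f := fun i' => x k i') (fun _ _ => hxnng k _)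
            (Finset.mem_univ i)
        rw [hxsum k] at h1
        simpa using h1
    have hSx : ∀ k, S *ᵥ x k = t k • x k - (c k)⁻¹ • (fun _ => (1:ℝ)) := by
      intro k
      have h1 : (t k • (1 : Matrix (Fin n) (Fin n) ℝ) - S) *ᵥ y k = fun _ => (1:ℝ) := by
        rw [hydef, Matrix.mulVec_mulVec, hR1 k, Matrix.one_mulVec]
      have h2 : t k • y k - S *ᵥ y k = fun _ => (1:ℝ) := by
        rw [← h1, Matrix.sub_mulVec, Matrix.smul_mulVec, Matrix.one_mulVec]
      have h3 : S *ᵥ y k = t k • y k - (fun _ => (1:ℝ)) := by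
        rw [← h2]; abel
      rw [hxdef]
      simp only [Matrix.mulVec_smul, h3]
      rw [smul_sub, smul_comm]
    obtain ⟨xl, hxlmem, φ, hφ, hconv⟩ := isCompact_Icc.tendsto_subseq hxmem
    have hcoord : ∀ i, Tendsto (fun k => x (φ k) i) atTop (𝓝 (xl i)) :=
      fun i => tendsto_pi_nhds.mp hconv i
    have htφ : Tendsto (fun k => t (φ k)) atTop (𝓝 ρ) := by
      have h1 : Tendsto t atTop (𝓝 ρ) := by
        rw [htdef]
        simpa using (tendsto_const_nhds (x := ρ)).add tendsto_one_div_add_atTop_nhds_zero_nat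
      exact h1.comp hφ.tendsto_atTop
    have hcφ : Tendsto (fun k => (c (φ k))⁻¹) atTop (𝓝 0) := by
      exact (tendsto_inv_atTop_zero).comp (hcinf.comp hφ.tendsto_atTop)
    have hxlsum : ∑ i, xl i = 1 := by
      have h1 : Tendsto (fun k => ∑ i, x (φ k) i) atTop (𝓝 (∑ i, xl i)) :=
        tendsto_finset_sum _ fun i _ => hcoord i
      have h2 : Tendsto (fun k => ∑ i, x (φ k) i) atTop (𝓝 1) := by
        simp only [hxsum]; exact tendsto_const_nhds
      exact tendsto_nhds_unique h1 h2
    refine ⟨xl, fun j => hxlmem.1 j, ?_, ?_⟩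
    · intro h0
      rw [h0] at hxlsum
      simp at hxlsum
    · funext i
      have hL1 : Tendsto (fun k => (S *ᵥ x (φ k)) i) atTop (𝓝 ((S *ᵥ xl) i)) := by
        simp only [Matrix.mulVec, dotProduct]
        exact tendsto_finset_sum _ fun j _ => (hcoord j).const_mul _
      have hL2 : Tendsto (fun k => (S *ᵥ x (φ k)) i) atTop (𝓝 (ρ * xl i)) := by
        have heq : ∀ k, (S *ᵥ x (φ k)) i
            = t (φ k) * x (φ k) i - (c (φ k))⁻¹ * 1 := by
          intro k
          rw [hSx (φ k)]
          simp [Pi.sub_apply, Pi.smul_apply, smul_eq_mul]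
        simp only [heq]
        have hsub : Tendsto (fun k => t (φ k) * x (φ k) i - (c (φ k))⁻¹ * 1) atTop
            (𝓝 (ρ * xl i - 0 * 1)) :=
          (htφ.mul (hcoord i)).sub (hcφ.mul (tendsto_const_nhds (x := (1:ℝ))))
        simpa using hsub
      have := tendsto_nhds_unique hL1 hL2
      rw [this]
      simp [Pi.smul_apply, smul_eq_mul, hρdef]
  

lemma specRad_empty (hn : n = 0) (B : Matrix (Fin n) (Fin n) ℝ) : specRad B = 0 := by
  subst hn
  have hsub : Subsingleton (Matrix (Fin 0) (Fin 0) ℂ) := by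
    constructor
    intro a b
    ext i j
    exact absurd i.2 (by omega)
  have hempty : {r : ℝ | ∃ μ : ℂ, μ ∈ spectrum ℂ (mcx B) ∧ r = ‖μ‖} = ∅ := by
    ext r
    simp only [Set.mem_setOf_eq, Set.mem_empty_iff_false, iff_false]
    rintro ⟨μ, hμ, rfl⟩
    exact hμ (@isUnit_of_subsingleton _ _ hsub _)
  rw [specRad_eq, hempty, Real.sSup_empty]

end SpecAux

open SpecAux in
/-- Lemma 2.7: comparison of regular splittings. If `A⁻¹ ≥ 0`,
`A = M - N = P - Q` are regular splittings and `P⁻¹ ≥ M⁻¹` entrywise,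
then `ρ(P⁻¹ Q) ≤ ρ(M⁻¹ N)`. -/
theorem specRad_le_of_regular_splittings {n : ℕ}
    (A M N P Q : Matrix (Fin n) (Fin n) ℝ)
    (hA : IsUnit A.det) (hAinv : ∀ i j, 0 ≤ A⁻¹ i j)
    (hMN : A = M - N) (hPQ : A = P - Q)
    (hM : IsUnit M.det) (hMinv : ∀ i j, 0 ≤ M⁻¹ i j) (hN : ∀ i j, 0 ≤ N i j)
    (hP : IsUnit P.det) (hPinv : ∀ i j, 0 ≤ P⁻¹ i j) (hQ : ∀ i j, 0 ≤ Q i j)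
    (hPM : ∀ i j, M⁻¹ i j ≤ P⁻¹ i j) :
    specRad (P⁻¹ * Q) ≤ specRad (M⁻¹ * N) := by
  rcases Nat.eq_zero_or_pos n with hn | hn
  · rw [specRad_empty hn, specRad_empty hn]
  haveI : Nonempty (Fin n) := Fin.pos_iff_nonempty.mp hn
  have hPP : P * P⁻¹ = 1 := Matrix.mul_nonsing_inv P hP
  have hPP' : P⁻¹ * P = 1 := Matrix.nonsing_inv_mul P hP
  have hAA : A * A⁻¹ = 1 := Matrix.mul_nonsing_inv A hA
  have hAA' : A⁻¹ * A = 1 := Matrix.nonsing_inv_mul A hA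
  have hMM' : M⁻¹ * M = 1 := Matrix.nonsing_inv_mul M hM
  set S : Matrix (Fin n) (Fin n) ℝ := P⁻¹ * Q with hSdef
  set T : Matrix (Fin n) (Fin n) ℝ := M⁻¹ * N with hTdef
  have hSnng : Nng S := Nng.mul (fun i j => hPinv i j) (fun i j => hQ i j)
  have hTnng : Nng T := Nng.mul (fun i j => hMinv i j) (fun i j => hN i j)
  have hPA : P⁻¹ * A = 1 - S := by
    rw [hPQ, Matrix.mul_sub, hPP', hSdef]
  have hMA : M⁻¹ * A = 1 - T := by
    rw [hMN, Matrix.mul_sub, hMM', hTdef]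
  -- σ ≤ 1
  have hPAQ : P = A + Q := by rw [hPQ]; abel
  have hCnng : Nng (A⁻¹ * P) := by
    have h1 : A⁻¹ * P = 1 + A⁻¹ * Q := by
      rw [hPAQ, Matrix.mul_add, hAA']
    intro i j
    rw [h1]
    have h2 : (0:ℝ) ≤ (1 : Matrix (Fin n) (Fin n) ℝ) i j := by
      rw [Matrix.one_apply]; split <;> norm_num
    have h3 : (0:ℝ) ≤ (A⁻¹ * Q) i j := (Nng.mul (fun i j => hAinv i j) (fun i j => hQ i j)) i j
    simp only [Matrix.add_apply]
    linarith
  have hCmul : ((1:ℝ) • (1 : Matrix (Fin n) (Fin n) ℝ) - S) * (A⁻¹ * P) = 1 := by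
    rw [one_smul, ← hPA]
    rw [Matrix.mul_assoc, ← Matrix.mul_assoc A A⁻¹ P, hAA, Matrix.one_mul, hPP']
  have hσle1 : specRad S ≤ 1 :=
    specRad_le_of_inv_nng hSnng hCnng one_pos hCmul
  rcases (specRad_nonneg S).lt_or_eq with hσ | hσ
  swap
  · rw [← hσ]; exact specRad_nonneg T
  obtain ⟨x, hx, hx0, hSx⟩ := pf_eigenvector hSnng hσ
  set σ : ℝ := specRad S with hσdef
  have hPS : P * S = Q := by rw [hSdef, ← Matrix.mul_assoc, hPP, Matrix.one_mul]
  have hQx : Q *ᵥ x = σ • (P *ᵥ x) := by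
    rw [← hPS, ← Matrix.mulVec_mulVec, hSx, Matrix.mulVec_smul]
  have hPxnng : ∀ i, 0 ≤ (P *ᵥ x) i := by
    intro i
    have h1 : 0 ≤ (Q *ᵥ x) i := Nng.mulVec (fun i j => hQ i j) hx i
    rw [hQx] at h1
    simp only [Pi.smul_apply, smul_eq_mul] at h1
    exact (mul_nonneg_iff_of_pos_left hσ).mp h1
  have hAx : A *ᵥ x = (1 - σ) • (P *ᵥ x) := by
    rw [hPQ, Matrix.sub_mulVec, hQx, sub_smul, one_smul]
  have hAxnng : ∀ i, 0 ≤ (A *ᵥ x) i := by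
    intro i
    rw [hAx]
    simp only [Pi.smul_apply, smul_eq_mul]
    exact mul_nonneg (by linarith) (hPxnng i)
  have hPAx : P⁻¹ *ᵥ (A *ᵥ x) = x - σ • x := by
    rw [Matrix.mulVec_mulVec, hPA, Matrix.sub_mulVec, Matrix.one_mulVec, hSx]
  have hMAx_le : ∀ i, (M⁻¹ *ᵥ (A *ᵥ x)) i ≤ (P⁻¹ *ᵥ (A *ᵥ x)) i := by
    intro i
    simp only [Matrix.mulVec, dotProduct]
    exact Finset.sum_le_sum fun j _ =>
      mul_le_mul_of_nonneg_right (hPM i j) (hAxnng j)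
  have hTx : ∀ i, σ * x i ≤ (T *ᵥ x) i := by
    intro i
    have hT1 : T = 1 - M⁻¹ * A := by rw [hMA]; abel
    have h2 : (T *ᵥ x) i = x i - (M⁻¹ *ᵥ (A *ᵥ x)) i := by
      rw [hT1, Matrix.sub_mulVec, Matrix.one_mulVec, Matrix.mulVec_mulVec]
      rfl
    have h3 := hMAx_le i
    rw [hPAx] at h3
    simp only [Pi.sub_apply, Pi.smul_apply, smul_eq_mul] at h3
    rw [h2]
    linarith
  exact subinv hTnng hx hx0 hσ hTx
end
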